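/- Let G_1 and G_2 be finite untwisted groups (i.e., Br^2(G_i) = H^2(G_i,U(1)) ≠ 1 for i = 1,2) whose orders are coprime: gcd(|G_1|,|G_2|) = 1. Then G_1 × G_2 is untwisted, i.e., every class in H^2(G_1 × G_2, U(1)) is untwisted: Br^2(G_1 × G_2) = H^2(G_1 × G_2, U(1)) ≠ 1. -/
import Mathlib


namespace DT

variable {G : Type*} [Group G]

/-- The (inhomogeneous bar) 2-cocycle identity for a `U(1)`-valued 2-cochain, written
multiplicatively: `ω(g₂,g₃)·ω(g₁,g₂g₃) = ω(g₁g₂,g₃)·ω(g₁,g₂)`. -/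
def IsCocycle2 (ω : G → G → Circle) : Prop :=
  ∀ g₁ g₂ g₃ : G, ω g₂ g₃ * ω g₁ (g₂ * g₃) = ω (g₁ * g₂) g₃ * ω g₁ g₂

/-- A `U(1)`-valued 2-coboundary: `ω(g₁,g₂) = α(g₂)·α(g₁g₂)⁻¹·α(g₁)`. -/
def IsCoboundary2 (ω : G → G → Circle) : Prop :=
  ∃ α : G → Circle, ∀ g₁ g₂ : G, ω g₁ g₂ = α g₂ * (α (g₁ * g₂))⁻¹ * α g₁

/-- A 2-cochain is untwisted if `ω(g,h) = ω(h,g)` for all commuting pairs. -/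
def Untwisted2 (ω : G → G → Circle) : Prop :=
  ∀ g h : G, g * h = h * g → ω g h = ω h g

end DT

open DT in
/-- A finite group is untwisted if every 2-cocycle class is untwisted and
`H²(G,U(1))` is non-trivial. -/
def UntwistedGroup (G : Type*) [Group G] : Prop :=
  (∀ ω : G → G → Circle, IsCocycle2 ω → Untwisted2 ω) ∧
  (∃ ω : G → G → Circle, IsCocycle2 ω ∧ ¬ IsCoboundary2 ω)

namespace DTAux

open DT

variable {G : Type*} [Group G] {ω : G → G → Circle}

lemma cocycle_one_right (hω : IsCocycle2 ω) (g : G) : ω g 1 = ω 1 1 := by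
  have h := hω g 1 1
  simp only [mul_one, one_mul] at h
  exact (mul_right_cancel h).symm

lemma cocycle_one_left (hω : IsCocycle2 ω) (g : G) : ω 1 g = ω 1 1 := by
  have h := hω 1 1 g
  simp only [mul_one, one_mul] at h
  exact mul_left_cancel h

/-- The commutator pairing `β(g,h) = ω(g,h)/ω(h,g)`. -/
noncomputable def beta (ω : G → G → Circle) (g h : G) : Circle := ω g h / ω h g

lemma beta_one_left (hω : IsCocycle2 ω) (h : G) : beta ω 1 h = 1 := by
  simp [beta, cocycle_one_left hω, cocycle_one_right hω]

lemma beta_inv (g h : G) : beta ω h g = (beta ω g h)⁻¹ := by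
  simp [beta, inv_div]

lemma beta_mul_left (hω : IsCocycle2 ω) (a b c : G)
    (hac : a * c = c * a) (hbc : b * c = c * b) :
    beta ω (a * b) c = beta ω a c * beta ω b c := by
  have h1 := hω a b c
  have h2 := hω c a b
  have h3 := hω a c b
  rw [hac, ← hbc] at h3
  -- h1 : ω b c * ω a (b*c) = ω (a*b) c * ω a b
  -- h2 : ω a b * ω c (a*b) = ω (c*a) b * ω c a
  -- h3 : ω c b * ω a (b*c) = ω (c*a) b * ω a c
  have key : ω c (a * b) * ω a c * ω b c * ω a b
      = ω c a * ω c b * ω (a * b) c * ω a b := by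
    calc ω c (a * b) * ω a c * ω b c * ω a b
        = (ω a b * ω c (a * b)) * (ω a c * ω b c) := by
          simp only [mul_comm, mul_left_comm, mul_assoc]
      _ = (ω (c * a) b * ω c a) * (ω a c * ω b c) := by rw [h2]
      _ = ω c a * ω b c * (ω (c * a) b * ω a c) := by
          simp only [mul_comm, mul_left_comm, mul_assoc]
      _ = ω c a * ω b c * (ω c b * ω a (b * c)) := by rw [← h3]
      _ = ω c a * ω c b * (ω b c * ω a (b * c)) := by
          simp only [mul_comm, mul_left_comm, mul_assoc]
      _ = ω c a * ω c b * (ω (a * b) c * ω a b) := by rw [h1]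
      _ = ω c a * ω c b * ω (a * b) c * ω a b := by
          simp only [mul_comm, mul_left_comm, mul_assoc]
  have key2 : ω c (a * b) * ω a c * ω b c = ω c a * ω c b * ω (a * b) c :=
    mul_right_cancel key
  rw [beta, beta, beta, div_mul_div_comm, div_eq_div_iff_mul_eq_mul]
  calc ω (a * b) c * (ω c a * ω c b) = ω c a * ω c b * ω (a * b) c := by
        simp only [mul_comm, mul_left_comm, mul_assoc]
    _ = ω c (a * b) * ω a c * ω b c := key2.symm
    _ = ω a c * ω b c * ω c (a * b) := by
        simp only [mul_comm, mul_left_comm, mul_assoc]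

lemma beta_mul_right (hω : IsCocycle2 ω) (c a b : G)
    (hac : a * c = c * a) (hbc : b * c = c * b) :
    beta ω c (a * b) = beta ω c a * beta ω c b := by
  rw [beta_inv (a*b) c, beta_mul_left hω a b c hac hbc, mul_inv,
    ← beta_inv a c, ← beta_inv b c]

lemma beta_pow (hω : IsCocycle2 ω) (a c : G) (hac : a * c = c * a) (n : ℕ) :
    beta ω (a ^ n) c = (beta ω a c) ^ n := by
  induction n with
  | zero => simpa using beta_one_left hω c
  | succ n ih =>
      rw [pow_succ, beta_mul_left hω (a ^ n) a c ((Commute.pow_left hac n)) hac, ih, pow_succ]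

lemma beta_eq_one (hω : IsCocycle2 ω) {g h : G} (hn : beta ω g h = 1) : ω g h = ω h g :=
  div_eq_one.mp hn

end DTAux

open DT DTAux in
/-- a direct product of untwisted groups of coprime orders is untwisted. -/
theorem stmt9 (G₁ G₂ : Type*) [Group G₁] [Group G₂] [Finite G₁] [Finite G₂]
    (hcop : Nat.Coprime (Nat.card G₁) (Nat.card G₂))
    (h₁ : UntwistedGroup G₁) (h₂ : UntwistedGroup G₂) :
    UntwistedGroup (G₁ × G₂) := by
  constructor
  · intro ω hω g h hcomm
    obtain ⟨a₁, a₂⟩ := g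
    obtain ⟨b₁, b₂⟩ := h
    rw [Prod.mk_mul_mk, Prod.mk_mul_mk, Prod.mk.injEq] at hcomm
    obtain ⟨hc1, hc2⟩ := hcomm
    set x₁ : G₁ × G₂ := (a₁, 1)
    set x₂ : G₁ × G₂ := (1, a₂)
    set y₁ : G₁ × G₂ := (b₁, 1)
    set y₂ : G₁ × G₂ := (1, b₂)
    have hg : (a₁, a₂) = x₁ * x₂ := by simp [x₁, x₂, Prod.mk_mul_mk]
    have hh : (b₁, b₂) = y₁ * y₂ := by simp [y₁, y₂, Prod.mk_mul_mk]
    -- commutation facts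
    have hx1h : x₁ * (b₁, b₂) = (b₁, b₂) * x₁ := by
      simp [x₁, Prod.mk_mul_mk, hc1]
    have hx2h : x₂ * (b₁, b₂) = (b₁, b₂) * x₂ := by
      simp [x₂, Prod.mk_mul_mk, hc2]
    have hx1y1 : x₁ * y₁ = y₁ * x₁ := by simp [x₁, y₁, Prod.mk_mul_mk, hc1]
    have hx1y2 : x₁ * y₂ = y₂ * x₁ := by simp [x₁, y₂, Prod.mk_mul_mk]
    have hx2y1 : x₂ * y₁ = y₁ * x₂ := by simp [x₂, y₁, Prod.mk_mul_mk]
    have hx2y2 : x₂ * y₂ = y₂ * x₂ := by simp [x₂, y₂, Prod.mk_mul_mk, hc2]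
    -- restriction cocycles
    have hres1 : IsCocycle2 (fun a b : G₁ => ω (a, 1) (b, 1)) := by
      intro u v w
      have := hω (u, 1) (v, 1) (w, 1)
      simpa [Prod.mk_mul_mk] using this
    have hres2 : IsCocycle2 (fun a b : G₂ => ω (1, a) (1, b)) := by
      intro u v w
      have := hω (1, u) (1, v) (1, w)
      simpa [Prod.mk_mul_mk] using this
    have hb11 : beta ω x₁ y₁ = 1 := by
      have := h₁.1 _ hres1 a₁ b₁ hc1
      simpa [beta, div_eq_one, x₁, y₁] using this
    have hb22 : beta ω x₂ y₂ = 1 := by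
      have := h₂.1 _ hres2 a₂ b₂ hc2
      simpa [beta, div_eq_one, x₂, y₂] using this
    -- cross terms vanish by coprimality
    have cross : ∀ (u : G₁) (v : G₂), beta ω (u, (1:G₂)) ((1:G₁), v) = 1 := by
      intro u v
      have hcomm' : ((u, (1:G₂)) : G₁ × G₂) * (1, v) = (1, v) * (u, 1) := by
        simp [Prod.mk_mul_mk]
      set z := beta ω ((u, (1:G₂)) : G₁ × G₂) (((1:G₁), v)) with hz
      have hz1 : z ^ Nat.card G₁ = 1 := by
        have hpow : ((u, (1:G₂)) : G₁ × G₂) ^ Nat.card G₁ = 1 := by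
          rw [Prod.pow_mk, pow_card_eq_one', one_pow, Prod.mk_one_one]
        rw [hz, ← beta_pow hω _ _ hcomm', hpow, beta_one_left hω]
      have hz2 : z ^ Nat.card G₂ = 1 := by
        have hpow : (((1:G₁), v) : G₁ × G₂) ^ Nat.card G₂ = 1 := by
          rw [Prod.pow_mk, pow_card_eq_one', one_pow, Prod.mk_one_one]
        have : beta ω (((1:G₁), v) : G₁ × G₂) (u, 1) ^ Nat.card G₂ = 1 := by
          rw [← beta_pow hω _ _ hcomm'.symm, hpow, beta_one_left hω]
        rw [hz, beta_inv]
        rw [inv_pow, this, inv_one]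
      have hdvd : orderOf z ∣ 1 := by
        rw [← hcop]
        exact Nat.dvd_gcd (orderOf_dvd_of_pow_eq_one hz1) (orderOf_dvd_of_pow_eq_one hz2)
      rw [Nat.dvd_one] at hdvd
      exact orderOf_eq_one_iff.mp hdvd
    have hb12 : beta ω x₁ y₂ = 1 := cross a₁ b₂
    have hb21 : beta ω x₂ y₁ = 1 := by
      rw [show (x₂ : G₁ × G₂) = (1, a₂) from rfl, show (y₁ : G₁ × G₂) = (b₁, 1) from rfl,
        beta_inv, cross b₁ a₂, inv_one]
    apply beta_eq_one hω
    have e1 : beta ω (a₁, a₂) (b₁, b₂) = beta ω x₁ (b₁, b₂) * beta ω x₂ (b₁, b₂) := by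
      rw [hg]; exact beta_mul_left hω _ _ _ hx1h hx2h
    have e2 : beta ω x₁ (b₁, b₂) = beta ω x₁ y₁ * beta ω x₁ y₂ := by
      rw [hh]; exact beta_mul_right hω _ _ _ hx1y1.symm hx1y2.symm
    have e3 : beta ω x₂ (b₁, b₂) = beta ω x₂ y₁ * beta ω x₂ y₂ := by
      rw [hh]; exact beta_mul_right hω _ _ _ hx2y1.symm hx2y2.symm
    rw [e1, e2, e3, hb11, hb12, hb21, hb22]
    simp
  · obtain ⟨ω₁, hcoc, hnb⟩ := h₁.2
    refine ⟨fun g h => ω₁ g.1 h.1, ?_, ?_⟩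
    · intro g₁ g₂ g₃
      exact hcoc g₁.1 g₂.1 g₃.1
    · rintro ⟨α, hα⟩
      refine hnb ⟨fun a => α (a, 1), fun a b => ?_⟩
      have := hα (a, 1) (b, 1)
      simpa [Prod.mk_mul_mk] using this
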